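/- Let S be a countable Boolean inverse ∧-monoid. If S is 0-simplifying then either the Boolean algebra E(S) of idempotents is atomless or E(S) is finite. -/

import Mathlib

universe u

/-- An inverse monoid with zero: every element `a` has a unique generalized
inverse `a⁻¹`, and `0` is an absorbing element. -/
class InverseMonoidWithZero (S : Type u) extends Monoid S, Zero S, Inv S where
  zero_mul' : ∀ a : S, 0 * a = 0
  mul_zero' : ∀ a : S, a * 0 = 0
  mul_inv_mul : ∀ a : S, a * a⁻¹ * a = a
  inv_mul_inv : ∀ a : S, a⁻¹ * a * a⁻¹ = a⁻¹
  inv_unique : ∀ a b : S, a * b * a = a → b * a * b = b → b = a⁻¹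

section BasicDefs

variable {S : Type u}

/-- The natural partial order: `a ≤ b` iff `a = e * b` for some idempotent `e`. -/
def nle [InverseMonoidWithZero S] (a b : S) : Prop :=
  ∃ e : S, e * e = e ∧ a = e * b

/-- `a` and `b` are compatible if `a * b⁻¹` and `a⁻¹ * b` are idempotents. -/
def Compat [InverseMonoidWithZero S] (a b : S) : Prop :=
  (a * b⁻¹) * (a * b⁻¹) = a * b⁻¹ ∧ (a⁻¹ * b) * (a⁻¹ * b) = a⁻¹ * b

/-- `a` and `b` are orthogonal if `a * b⁻¹ = 0` and `a⁻¹ * b = 0`. -/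
def Orth [InverseMonoidWithZero S] (a b : S) : Prop :=
  a * b⁻¹ = 0 ∧ a⁻¹ * b = 0

end BasicDefs

/-- A distributive inverse monoid: every compatible pair has a join (for the
natural partial order), recorded by `sup`, and multiplication distributes over
these binary joins. -/
class DistributiveInverseMonoid (S : Type u) extends InverseMonoidWithZero S where
  sup : S → S → S
  le_sup_left : ∀ a b : S, Compat a b → nle a (sup a b)
  le_sup_right : ∀ a b : S, Compat a b → nle b (sup a b)
  sup_le : ∀ a b c : S, Compat a b → nle a c → nle b c → nle (sup a b) c
  mul_sup : ∀ a b c : S, Compat a b → c * sup a b = sup (c * a) (c * b)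
  sup_mul : ∀ a b c : S, Compat a b → sup a b * c = sup (a * c) (b * c)

/-- A Boolean inverse monoid: a distributive inverse monoid whose idempotents
form a Boolean algebra under the natural partial order; `compl` records the
complementation on idempotents. -/
class BooleanInverseMonoid (S : Type u) extends DistributiveInverseMonoid S where
  compl : S → S
  compl_idem : ∀ e : S, e * e = e → compl e * compl e = compl e
  mul_compl : ∀ e : S, e * e = e → e * compl e = 0
  sup_compl : ∀ e : S, e * e = e → sup e (compl e) = 1

/-- A Boolean inverse ∧-monoid: a Boolean inverse monoid in which every pair of
elements has a meet with respect to the natural partial order. -/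
class BooleanInverseMeetMonoid (S : Type u) extends BooleanInverseMonoid S where
  inf : S → S → S
  inf_le_left : ∀ a b : S, nle (inf a b) a
  inf_le_right : ∀ a b : S, nle (inf a b) b
  le_inf : ∀ a b c : S, nle c a → nle c b → nle c (inf a b)

section MoreDefs

variable {S : Type u}

/-- The join of a compatible pair. -/
def bsup [DistributiveInverseMonoid S] (a b : S) : S := DistributiveInverseMonoid.sup a b

/-- Complementation in the Boolean algebra of idempotents. -/
def bcompl [BooleanInverseMonoid S] (e : S) : S := BooleanInverseMonoid.compl e

/-- The binary meet. -/
def binf [BooleanInverseMeetMonoid S] (a b : S) : S := BooleanInverseMeetMonoid.inf a b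

/-- The fixed-point operator `φ(s) = s ∧ 1`. -/
def phi [BooleanInverseMeetMonoid S] (s : S) : S := binf s 1

/-- The support operator `σ(s) = \overline{φ(s)} ⋅ s⁻¹ s`. -/
def sigma [BooleanInverseMeetMonoid S] (s : S) : S := bcompl (phi s) * (s⁻¹ * s)

/-- An infinitesimal is a non-zero element that squares to zero. -/
def Infinitesimal [InverseMonoidWithZero S] (a : S) : Prop := a ≠ 0 ∧ a * a = 0

/-- A (two-sided) ideal. -/
def IsMIdeal [InverseMonoidWithZero S] (I : Set S) : Prop :=
  I.Nonempty ∧ ∀ a ∈ I, ∀ s : S, s * a ∈ I ∧ a * s ∈ I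

/-- A ∨-ideal: an ideal closed under joins of compatible pairs. -/
def IsVIdeal [DistributiveInverseMonoid S] (I : Set S) : Prop :=
  IsMIdeal I ∧ ∀ a ∈ I, ∀ b ∈ I, Compat a b → bsup a b ∈ I

end MoreDefs

/-- 0-simplifying: the only ∨-ideals are `{0}` and `S`. -/
def ZeroSimplifying (S : Type u) [DistributiveInverseMonoid S] : Prop :=
  ∀ I : Set S, IsVIdeal I → I = {0} ∨ I = Set.univ

/-- 0-simple: non-trivial and the only ideals are `{0}` and `S`. -/
def ZeroSimple (S : Type u) [InverseMonoidWithZero S] : Prop :=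
  (∃ s : S, s ≠ 0) ∧ ∀ I : Set S, IsMIdeal I → I = {0} ∨ I = Set.univ

/-- Fundamental: every element commuting with all idempotents is an idempotent. -/
def Fundamental (S : Type u) [InverseMonoidWithZero S] : Prop :=
  ∀ a : S, (∀ e : S, e * e = e → a * e = e * a) → a * a = a

/-- The Boolean algebra of idempotents is atomless. -/
def IdemAtomless (S : Type u) [InverseMonoidWithZero S] : Prop :=
  ∀ e : S, e * e = e → e ≠ 0 → ∃ f : S, f * f = f ∧ f ≠ 0 ∧ nle f e ∧ f ≠ e

section Filters

variable {S : Type u}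

/-- A filter in a Boolean inverse ∧-monoid: a nonempty subset closed under
binary meets and upward closed in the natural partial order. -/
def IsMFilter [BooleanInverseMeetMonoid S] (A : Set S) : Prop :=
  A.Nonempty ∧ (∀ a ∈ A, ∀ b ∈ A, binf a b ∈ A) ∧ ∀ a ∈ A, ∀ b : S, nle a b → b ∈ A

/-- An ultrafilter: a maximal proper filter. -/
def IsMUltrafilter [BooleanInverseMeetMonoid S] (A : Set S) : Prop :=
  IsMFilter A ∧ (0 : S) ∉ A ∧ ∀ B : Set S, IsMFilter B → (0 : S) ∉ B → A ⊆ B → A = B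

/-- A filter of the Boolean algebra of idempotents (meet of idempotents is
their product). -/
def IsIdemFilter [InverseMonoidWithZero S] (F : Set S) : Prop :=
  F.Nonempty ∧ (∀ e ∈ F, e * e = e) ∧ (∀ e ∈ F, ∀ f ∈ F, e * f ∈ F) ∧
    ∀ e ∈ F, ∀ f : S, f * f = f → nle e f → f ∈ F

/-- An ultrafilter of the Boolean algebra of idempotents. -/
def IsIdemUltrafilter [InverseMonoidWithZero S] (F : Set S) : Prop :=
  IsIdemFilter F ∧ (0 : S) ∉ F ∧
    ∀ G : Set S, IsIdemFilter G → (0 : S) ∉ G → F ⊆ G → F = G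

end Filters

section PencilDefs

variable {S : Type u}

/-- `Preceq e f`: there is a pencil from `e` to `f`, i.e. finitely many
elements `x₁, …, xₘ` with `r(xᵢ) ≤ f` for all `i` and `e = ⋁ d(xᵢ)`
(a least upper bound for the natural partial order). -/
def Preceq [DistributiveInverseMonoid S] (e f : S) : Prop :=
  ∃ l : List S, l ≠ [] ∧ (∀ x ∈ l, nle (x * x⁻¹) f) ∧
    (∀ x ∈ l, nle (x⁻¹ * x) e) ∧ ∀ c : S, (∀ x ∈ l, nle (x⁻¹ * x) c) → nle e c

/-- Piecewise factorizable: every element is a finite join of elements each of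
which lies beneath a unit. -/
def PiecewiseFactorizable (S : Type u) [DistributiveInverseMonoid S] : Prop :=
  ∀ s : S, ∃ l : List S, l ≠ [] ∧ (∀ x ∈ l, ∃ g : S, IsUnit g ∧ nle x g) ∧
    (∀ x ∈ l, nle x s) ∧ ∀ c : S, (∀ x ∈ l, nle x c) → nle s c

/-- A properly infinite idempotent. -/
def ProperlyInfinite [DistributiveInverseMonoid S] (e : S) : Prop :=
  ∃ x y : S, x⁻¹ * x = e ∧ y⁻¹ * y = e ∧ Orth (x * x⁻¹) (y * y⁻¹) ∧
    nle (bsup (x * x⁻¹) (y * y⁻¹)) e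

end PencilDefs

/-- Purely infinite: every non-zero idempotent is properly infinite. -/
def PurelyInfinite (S : Type u) [DistributiveInverseMonoid S] : Prop :=
  ∀ e : S, e * e = e → e ≠ 0 → ProperlyInfinite e

section Statement4Proof

open InverseMonoidWithZero DistributiveInverseMonoid

variable {S : Type u} [BooleanInverseMeetMonoid S]

private lemma iv (a : S) : a⁻¹⁻¹ = a :=
  (InverseMonoidWithZero.inv_unique a⁻¹ a (inv_mul_inv a) (mul_inv_mul a)).symm

private lemma idem_inv {e : S} (he : e * e = e) : e⁻¹ = e :=
  (InverseMonoidWithZero.inv_unique e e (by rw [he, he]) (by rw [he, he])).symm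

private lemma zinv : (0 : S)⁻¹ = 0 :=
  (InverseMonoidWithZero.inv_unique 0 0 (by rw [zero_mul', zero_mul'])
    (by rw [zero_mul', zero_mul'])).symm

private lemma rE (a : S) : (a * a⁻¹) * (a * a⁻¹) = a * a⁻¹ := by
  rw [← mul_assoc, mul_inv_mul]

private lemma dE (a : S) : (a⁻¹ * a) * (a⁻¹ * a) = a⁻¹ * a := by
  rw [← mul_assoc, inv_mul_inv]

private lemma idem_mul_idem {e f : S} (he : e * e = e) (hf : f * f = f) :
    (e * f) * (e * f) = e * f := by
  set x := (e * f)⁻¹ with hx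
  have h1 : (e * f) * (f * x * e) * (e * f) = e * f := by
    have c1 : (e * f) * (f * x * e) * (e * f) = e * ((f * f) * x * (e * e)) * f := by
      simp only [mul_assoc]
    rw [c1, hf, he]
    have c2 : e * (f * x * e) * f = (e * f) * x * (e * f) := by
      simp only [mul_assoc]
    rw [c2, mul_inv_mul]
  have h2 : (f * x * e) * (e * f) * (f * x * e) = f * x * e := by
    have c1 : (f * x * e) * (e * f) * (f * x * e) = f * (x * ((e * e) * (f * f) * x)) * e := by
      simp only [mul_assoc]
    rw [c1, he, hf]
    have c2 : f * (x * (e * f * x)) * e = f * (x * (e * f) * x) * e := by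
      simp only [mul_assoc]
    rw [c2, inv_mul_inv]
  have hx2 : f * x * e = x :=
    InverseMonoidWithZero.inv_unique (e * f) (f * x * e) h1 h2
  have hxx : x * x = x := by
    conv_lhs => rw [← hx2]
    have c1 : f * x * e * (f * x * e) = f * (x * (e * f) * x) * e := by
      simp only [mul_assoc]
    rw [c1, inv_mul_inv, hx2]
  have hef : e * f = x := by
    calc e * f = x⁻¹ := by rw [hx, iv]
    _ = x := idem_inv hxx
  rw [hef]; exact hxx

private lemma idem_comm {e f : S} (he : e * e = e) (hf : f * f = f) :
    e * f = f * e := by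
  have hef := idem_mul_idem he hf
  have h1 : (e * f) * (f * e) * (e * f) = e * f := by
    have c1 : (e * f) * (f * e) * (e * f) = e * (f * f) * (e * e) * f := by
      simp only [mul_assoc]
    rw [c1, hf, he]
    have c2 : e * f * e * f = (e * f) * (e * f) := by simp only [mul_assoc]
    rw [c2, hef]
  have h2 : (f * e) * (e * f) * (f * e) = f * e := by
    have c1 : (f * e) * (e * f) * (f * e) = f * (e * e) * (f * f) * e := by
      simp only [mul_assoc]
    rw [c1, he, hf]
    have c2 : f * e * f * e = (f * e) * (f * e) := by simp only [mul_assoc]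
    rw [c2, idem_mul_idem hf he]
  have := InverseMonoidWithZero.inv_unique (e * f) (f * e) h1 h2
  rw [this, idem_inv hef]

private lemma mul_inv_rev' (a b : S) : (a * b)⁻¹ = b⁻¹ * a⁻¹ := by
  have h1 : (a * b) * (b⁻¹ * a⁻¹) * (a * b) = a * b := by
    have c1 : (a * b) * (b⁻¹ * a⁻¹) * (a * b) = a * ((b * b⁻¹) * (a⁻¹ * a)) * b := by
      simp only [mul_assoc]
    rw [c1, idem_comm (rE b) (dE a)]
    have c2 : a * (a⁻¹ * a * (b * b⁻¹)) * b = (a * a⁻¹ * a) * (b * b⁻¹ * b) := by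
      simp only [mul_assoc]
    rw [c2, mul_inv_mul, mul_inv_mul]
  have h2 : (b⁻¹ * a⁻¹) * (a * b) * (b⁻¹ * a⁻¹) = b⁻¹ * a⁻¹ := by
    have c1 : (b⁻¹ * a⁻¹) * (a * b) * (b⁻¹ * a⁻¹) = b⁻¹ * ((a⁻¹ * a) * (b * b⁻¹)) * a⁻¹ := by
      simp only [mul_assoc]
    rw [c1, idem_comm (dE a) (rE b)]
    have c2 : b⁻¹ * (b * b⁻¹ * (a⁻¹ * a)) * a⁻¹ = (b⁻¹ * b * b⁻¹) * (a⁻¹ * a * a⁻¹) := by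
      simp only [mul_assoc]
    rw [c2, inv_mul_inv, inv_mul_inv]
  exact (InverseMonoidWithZero.inv_unique (a * b) (b⁻¹ * a⁻¹) h1 h2).symm

private lemma nle_refl (a : S) : nle a a := ⟨a * a⁻¹, rE a, (mul_inv_mul a).symm⟩

private lemma nle_trans {a b c : S} (h1 : nle a b) (h2 : nle b c) : nle a c := by
  obtain ⟨e, he, hab⟩ := h1
  obtain ⟨f, hf, hbc⟩ := h2
  exact ⟨e * f, idem_mul_idem he hf, by rw [hab, hbc, mul_assoc]⟩

private lemma nle_antisymm {a b : S} (h1 : nle a b) (h2 : nle b a) : a = b := by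
  obtain ⟨e, he, hab⟩ := h1
  obtain ⟨f, hf, hba⟩ := h2
  have ha2 : a = (e * f) * a := by rw [mul_assoc, ← hba, ← hab]
  have : b = (f * (e * f)) * a := by rw [mul_assoc, ← ha2, ← hba]
  rw [this, idem_comm he hf, ← mul_assoc, hf, idem_comm hf he, ← ha2]

private lemma nle_mul_left {a b : S} (h : nle a b) (c : S) : nle (c * a) (c * b) := by
  obtain ⟨e, he, hab⟩ := h
  refine ⟨c * e * c⁻¹, ?_, ?_⟩
  · have c1 : c * e * c⁻¹ * (c * e * c⁻¹) = c * (e * (c⁻¹ * c) * e) * c⁻¹ := by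
      simp only [mul_assoc]
    rw [c1, idem_comm he (dE c)]
    have c2 : c * (c⁻¹ * c * e * e) * c⁻¹ = (c * c⁻¹ * c) * ((e * e) * c⁻¹) := by
      simp only [mul_assoc]
    rw [c2, mul_inv_mul, he, ← mul_assoc]
  · have c1 : c * e * c⁻¹ * (c * b) = c * (e * (c⁻¹ * c)) * b := by simp only [mul_assoc]
    rw [c1, idem_comm he (dE c)]
    have c2 : c * (c⁻¹ * c * e) * b = (c * c⁻¹ * c) * (e * b) := by simp only [mul_assoc]
    rw [c2, mul_inv_mul, ← hab]

private lemma nle_mul_right {a b : S} (h : nle a b) (c : S) : nle (a * c) (b * c) := by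
  obtain ⟨e, he, hab⟩ := h
  exact ⟨e, he, by rw [hab, mul_assoc]⟩

private lemma nle_zero_left (a : S) : nle 0 a :=
  ⟨0, zero_mul' 0, (zero_mul' a).symm⟩

private lemma eq_zero_of_nle_zero {a : S} (h : nle a 0) : a = 0 := by
  obtain ⟨e, _, hab⟩ := h
  rw [hab, mul_zero']

private lemma nle_one_of_idem {a : S} (ha : a * a = a) : nle a 1 :=
  ⟨a, ha, (mul_one a).symm⟩

private lemma idem_of_nle_one {a : S} (h : nle a 1) : a * a = a := by
  obtain ⟨e, he, hab⟩ := h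
  rw [hab, mul_one] at *
  exact he

private lemma idem_of_nle {a b : S} (hb : b * b = b) (h : nle a b) : a * a = a := by
  obtain ⟨e, he, hab⟩ := h
  rw [hab]; exact idem_mul_idem he hb

private lemma mul_eq_of_nle {a b : S} (h : nle a b) : a * (b⁻¹ * b) = a := by
  obtain ⟨e, he, hab⟩ := h
  rw [hab, mul_assoc, ← mul_assoc b b⁻¹ b, mul_inv_mul]

private lemma idem_nle_mul {a b : S} (hb : b * b = b) (h : nle a b) : a * b = a := by
  have := mul_eq_of_nle h
  rwa [idem_inv hb, hb] at this

private lemma nle_of_mul_eq {a b : S} (ha : a * a = a) (h : a * b = a) : nle a b :=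
  ⟨a, ha, h.symm⟩

private lemma inv_mul_of_nle {s u : S} (h : nle s u) : u⁻¹ * s = s⁻¹ * s := by
  obtain ⟨g, hg, hs⟩ := h
  rw [hs, mul_inv_rev', idem_inv hg]
  have c1 : u⁻¹ * g * (g * u) = u⁻¹ * (g * g) * u := by simp only [mul_assoc]
  rw [c1, hg]
  simp only [mul_assoc]

private lemma conj_idem {e : S} (he : e * e = e) (t : S) :
    (t * e * t⁻¹) * (t * e * t⁻¹) = t * e * t⁻¹ := by
  have c1 : t * e * t⁻¹ * (t * e * t⁻¹) = t * (e * (t⁻¹ * t) * e) * t⁻¹ := by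
    simp only [mul_assoc]
  rw [c1, idem_comm he (dE t)]
  have c2 : t * (t⁻¹ * t * e * e) * t⁻¹ = (t * t⁻¹ * t) * ((e * e) * t⁻¹) := by
    simp only [mul_assoc]
  rw [c2, mul_inv_mul, he, ← mul_assoc]

private lemma conj_idem' {e : S} (he : e * e = e) (t : S) :
    (t⁻¹ * e * t) * (t⁻¹ * e * t) = t⁻¹ * e * t := by
  have := conj_idem he t⁻¹
  rwa [iv] at this

private lemma compat_idem {e f : S} (he : e * e = e) (hf : f * f = f) : Compat e f := by
  unfold Compat
  rw [idem_inv hf, idem_inv he]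
  exact ⟨idem_mul_idem he hf, idem_mul_idem he hf⟩

private lemma compat_zero (a : S) : Compat a 0 := by
  unfold Compat
  rw [zinv]
  constructor <;> simp only [mul_zero', zero_mul']

private lemma compat_mul {a b : S} (ha : a * a = a) (hb : b * b = b) (t : S) :
    Compat (t * a) (t * b) := by
  constructor
  · rw [mul_inv_rev', idem_inv hb]
    have c1 : t * a * (b * t⁻¹) = t * (a * b) * t⁻¹ := by simp only [mul_assoc]
    rw [c1]
    exact conj_idem (idem_mul_idem ha hb) t
  · rw [mul_inv_rev', idem_inv ha]
    have c1 : a * t⁻¹ * (t * b) = a * (t⁻¹ * t) * b := by simp only [mul_assoc]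
    rw [c1, idem_comm ha (dE t)]
    have hx : (t⁻¹ * t * a) * b * ((t⁻¹ * t * a) * b) = (t⁻¹ * t * a) * b := by
      exact idem_mul_idem (idem_mul_idem (dE t) ha) hb
    have c2 : t⁻¹ * t * a * b * (t⁻¹ * t * a * b) = t⁻¹ * t * a * b := hx
    exact c2

private lemma mul_bsup {a b : S} (c : S) (h : Compat a b) :
    c * bsup a b = bsup (c * a) (c * b) :=
  DistributiveInverseMonoid.mul_sup a b c h

private lemma bsup_mul {a b : S} (c : S) (h : Compat a b) :
    bsup a b * c = bsup (a * c) (b * c) :=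
  DistributiveInverseMonoid.sup_mul a b c h

private lemma bsup_nle_left {e f : S} (hc : Compat e f) : nle e (bsup e f) :=
  DistributiveInverseMonoid.le_sup_left e f hc

private lemma bsup_nle_right {e f : S} (hc : Compat e f) : nle f (bsup e f) :=
  DistributiveInverseMonoid.le_sup_right e f hc

private lemma bsup_nle {e f c : S} (hc : Compat e f) (h1 : nle e c) (h2 : nle f c) :
    nle (bsup e f) c :=
  DistributiveInverseMonoid.sup_le e f c hc h1 h2

private lemma bsup_idem {e f : S} (he : e * e = e) (hf : f * f = f) :
    (bsup e f) * (bsup e f) = bsup e f :=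
  idem_of_nle_one (bsup_nle (compat_idem he hf) (nle_one_of_idem he) (nle_one_of_idem hf))

private lemma bsup_zero (a : S) : bsup a 0 = a :=
  nle_antisymm (bsup_nle (compat_zero a) (nle_refl a) (nle_zero_left a))
    (bsup_nle_left (compat_zero a))

/-- Join of a list. -/
private def jl (l : List S) : S := l.foldr bsup 0

private lemma jl_nil : jl ([] : List S) = 0 := rfl

private lemma jl_cons (a : S) (l : List S) : jl (a :: l) = bsup a (jl l) := rfl

private lemma jl_idem {l : List S} (hl : ∀ x ∈ l, x * x = x) : (jl l) * (jl l) = jl l := by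
  induction l with
  | nil => rw [jl_nil]; exact zero_mul' 0
  | cons a t ih =>
    rw [jl_cons]
    exact bsup_idem (hl a (List.mem_cons_self)) (ih fun x hx => hl x (List.mem_cons_of_mem a hx))

private lemma jl_le {l : List S} {c : S} (hl : ∀ x ∈ l, x * x = x)
    (h : ∀ x ∈ l, nle x c) : nle (jl l) c := by
  induction l with
  | nil => rw [jl_nil]; exact nle_zero_left c
  | cons a t ih =>
    rw [jl_cons]
    exact bsup_nle
      (compat_idem (hl a (List.mem_cons_self)) (jl_idem fun x hx => hl x (List.mem_cons_of_mem a hx)))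
      (h a (List.mem_cons_self))
      (ih (fun x hx => hl x (List.mem_cons_of_mem a hx)) (fun x hx => h x (List.mem_cons_of_mem a hx)))

private lemma mem_nle_jl {l : List S} {x : S} (hl : ∀ y ∈ l, y * y = y) (hx : x ∈ l) :
    nle x (jl l) := by
  induction l with
  | nil => exact absurd hx List.not_mem_nil
  | cons a t ih =>
    rw [jl_cons]
    have ht : ∀ y ∈ t, y * y = y := fun y hy => hl y (List.mem_cons_of_mem a hy)
    have hcomp : Compat a (jl t) := compat_idem (hl a (List.mem_cons_self)) (jl_idem ht)
    rcases List.mem_cons.mp hx with h | h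
    · rw [h]; exact bsup_nle_left hcomp
    · exact nle_trans (ih ht h) (bsup_nle_right hcomp)

private lemma mul_jl {l : List S} (hl : ∀ x ∈ l, x * x = x) (c : S) :
    c * jl l = jl (l.map (c * ·)) := by
  induction l with
  | nil => rw [jl_nil, List.map_nil, jl_nil, mul_zero']
  | cons a t ih =>
    rw [jl_cons, List.map_cons, jl_cons]
    have ht : ∀ y ∈ t, y * y = y := fun y hy => hl y (List.mem_cons_of_mem a hy)
    rw [mul_bsup c (compat_idem (hl a (List.mem_cons_self)) (jl_idem ht)), ih ht]

private lemma conj_jl {l : List S} (hl : ∀ x ∈ l, x * x = x) (t : S) :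
    t * jl l * t⁻¹ = jl (l.map (fun a => t * a * t⁻¹)) := by
  induction l with
  | nil => rw [jl_nil, List.map_nil, jl_nil, mul_zero', zero_mul']
  | cons a r ih =>
    rw [jl_cons, List.map_cons, jl_cons]
    have hr : ∀ y ∈ r, y * y = y := fun y hy => hl y (List.mem_cons_of_mem a hy)
    have ha := hl a (List.mem_cons_self)
    rw [mul_bsup t (compat_idem ha (jl_idem hr)),
      bsup_mul t⁻¹ (compat_mul ha (jl_idem hr) t), ih hr]

/-- An idempotent that is zero or an atom. -/
private def AtomOrZero (a : S) : Prop :=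
  a * a = a ∧ (a = 0 ∨ ∀ f : S, f * f = f → f ≠ 0 → nle f a → f = a)

private lemma d_conj (a s : S) : (a * s)⁻¹ * (a * s) = s⁻¹ * (a⁻¹ * a) * s := by
  rw [mul_inv_rev']
  simp only [mul_assoc]

private lemma d_mul_nle (s a : S) : nle ((s * a)⁻¹ * (s * a)) (a⁻¹ * a) := by
  rw [mul_inv_rev']
  have hsh : a⁻¹ * s⁻¹ * (s * a) = a⁻¹ * (s⁻¹ * s) * a := by simp only [mul_assoc]
  rw [hsh]
  have hE : (a⁻¹ * (s⁻¹ * s) * a) * (a⁻¹ * (s⁻¹ * s) * a) = a⁻¹ * (s⁻¹ * s) * a :=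
    conj_idem' (dE s) a
  refine ⟨a⁻¹ * (s⁻¹ * s) * a, hE, ?_⟩
  have c1 : a⁻¹ * (s⁻¹ * s) * a * (a⁻¹ * a) = a⁻¹ * ((s⁻¹ * s) * (a * a⁻¹)) * a := by
    simp only [mul_assoc]
  rw [c1, idem_comm (dE s) (rE a)]
  have c2 : a⁻¹ * (a * a⁻¹ * (s⁻¹ * s)) * a = (a⁻¹ * a * a⁻¹) * ((s⁻¹ * s) * a) := by
    simp only [mul_assoc]
  rw [c2, inv_mul_inv]
  simp only [mul_assoc]

private lemma atom_transfer {e : S} (he : AtomOrZero e) (x : S) (hx : nle (x * x⁻¹) e) :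
    AtomOrZero (x⁻¹ * x) := by
  refine ⟨dE x, ?_⟩
  by_cases h0 : x⁻¹ * x = 0
  · exact Or.inl h0
  have hr0 : x * x⁻¹ ≠ 0 := by
    intro hr
    apply h0
    have hx0 : x = 0 := by rw [← mul_inv_mul x, hr, zero_mul']
    rw [hx0, mul_zero']
  have he0 : e ≠ 0 := by
    intro hh; apply hr0; apply eq_zero_of_nle_zero; rwa [hh] at hx
  have hemin : ∀ f : S, f * f = f → f ≠ 0 → nle f e → f = e := by
    rcases he.2 with hh | hh
    · exact absurd hh he0
    · exact hh
  have hxe : x * x⁻¹ = e := hemin _ (rE x) hr0 hx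
  refine Or.inr fun f hf hf0 hfle => ?_
  have hfa : f * (x⁻¹ * x) = f := idem_nle_mul (dE x) hfle
  have hfa' : (x⁻¹ * x) * f = f := by rw [← idem_comm hf (dE x)]; exact hfa
  have hEr : (x * f * x⁻¹) * (x * f * x⁻¹) = x * f * x⁻¹ := conj_idem hf x
  have hre : (x * f * x⁻¹) * e = x * f * x⁻¹ := by
    rw [← hxe]
    have c1 : x * f * x⁻¹ * (x * x⁻¹) = x * (f * (x⁻¹ * x)) * x⁻¹ := by simp only [mul_assoc]
    rw [c1, hfa]
  have hfr : x⁻¹ * (x * f * x⁻¹) * x = f := by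
    have c1 : x⁻¹ * (x * f * x⁻¹) * x = (x⁻¹ * x) * (f * (x⁻¹ * x)) := by simp only [mul_assoc]
    rw [c1, hfa, hfa']
  have hr0' : x * f * x⁻¹ ≠ 0 := by
    intro hr; apply hf0
    rw [← hfr, hr, mul_zero', zero_mul']
  have hreq := hemin _ hEr hr0' (nle_of_mul_eq hEr hre)
  rw [← hfr, hreq, ← hxe]
  have c1 : x⁻¹ * (x * x⁻¹) * x = (x⁻¹ * x) * (x⁻¹ * x) := by simp only [mul_assoc]
  rw [c1, dE]

private lemma conj_atom {a : S} (ha : AtomOrZero a) (t : S) :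
    AtomOrZero (t⁻¹ * a * t) := by
  have key : t⁻¹ * a * t = (a * t)⁻¹ * (a * t) := by
    rw [mul_inv_rev', idem_inv ha.1]
    have c1 : t⁻¹ * a * (a * t) = t⁻¹ * (a * a) * t := by simp only [mul_assoc]
    rw [c1, ha.1]
  rw [key]
  apply atom_transfer ha
  rw [mul_inv_rev', idem_inv ha.1]
  rw [show a * t * (t⁻¹ * a) = a * (t * t⁻¹) * a from by simp only [mul_assoc]]
  have hE : (a * (t * t⁻¹) * a) * (a * (t * t⁻¹) * a) = a * (t * t⁻¹) * a :=
    idem_mul_idem (idem_mul_idem ha.1 (rE t)) ha.1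
  refine nle_of_mul_eq hE ?_
  rw [mul_assoc (a * (t * t⁻¹)) a a, ha.1]

end Statement4Proof

/-- If a countable Boolean inverse ∧-monoid is 0-simplifying,
then its Boolean algebra of idempotents is atomless or finite. -/
theorem statement4 (S : Type u) [BooleanInverseMeetMonoid S] [Countable S]
    (h : ZeroSimplifying S) :
    IdemAtomless S ∨ {e : S | e * e = e}.Finite := by
  classical
  by_cases hA : IdemAtomless S
  · exact Or.inl hA
  right
  unfold IdemAtomless at hA
  push_neg at hA
  obtain ⟨e, he, he0, hmin⟩ := hA
  have hAtom : AtomOrZero e := ⟨he, Or.inr hmin⟩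
  let I : Set S := {s | ∃ l : List S, (∀ a ∈ l, AtomOrZero a) ∧ nle (s⁻¹ * s) (jl l)}
  have hEl : ∀ (l : List S), (∀ a ∈ l, AtomOrZero a) → ∀ x ∈ l, x * x = x :=
    fun l hl x hx => (hl x hx).1
  have heI : e ∈ I := by
    refine ⟨[e], ?_, ?_⟩
    · intro a ha
      rw [List.mem_singleton] at ha
      rw [ha]; exact hAtom
    · rw [idem_inv he, he, jl_cons, jl_nil, bsup_zero]
      exact nle_refl e
  have hVI : IsVIdeal I := by
    refine ⟨⟨⟨e, heI⟩, ?_⟩, ?_⟩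
    · rintro a ⟨l, hl, hle⟩ s
      constructor
      · exact ⟨l, hl, nle_trans (d_mul_nle s a) hle⟩
      · refine ⟨l.map (fun x => s⁻¹ * x * s), ?_, ?_⟩
        · intro b hb
          rw [List.mem_map] at hb
          obtain ⟨x, hx, rfl⟩ := hb
          exact conj_atom (hl x hx) s
        · rw [d_conj]
          have h1 : nle (s⁻¹ * (a⁻¹ * a) * s) (s⁻¹ * jl l * s) :=
            nle_mul_right (nle_mul_left hle s⁻¹) s
          have h2 : s⁻¹ * jl l * s = jl (l.map (fun x => s⁻¹ * x * s)) := by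
            have hc := conj_jl (hEl l hl) s⁻¹
            rwa [iv] at hc
          rwa [h2] at h1
    · rintro a ⟨l₁, hl₁, hle₁⟩ b ⟨l₂, hl₂, hle₂⟩ hab
      refine ⟨l₁ ++ l₂, ?_, ?_⟩
      · intro x hx; rcases List.mem_append.mp hx with hh | hh
        exacts [hl₁ x hh, hl₂ x hh]
      · have hEapp : ∀ x ∈ l₁ ++ l₂, x * x = x := by
          intro x hx; rcases List.mem_append.mp hx with hh | hh
          exacts [(hl₁ x hh).1, (hl₂ x hh).1]
        have hd : (bsup a b)⁻¹ * (bsup a b) = bsup (a⁻¹ * a) (b⁻¹ * b) := by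
          rw [mul_bsup (bsup a b)⁻¹ hab,
            inv_mul_of_nle (bsup_nle_left hab), inv_mul_of_nle (bsup_nle_right hab)]
        rw [hd]
        refine bsup_nle (compat_idem (dE a) (dE b)) ?_ ?_
        · exact nle_trans hle₁ (jl_le (hEl _ hl₁) fun x hx =>
            mem_nle_jl hEapp (List.mem_append_left _ hx))
        · exact nle_trans hle₂ (jl_le (hEl _ hl₂) fun x hx =>
            mem_nle_jl hEapp (List.mem_append_right _ hx))
  rcases h I hVI with hI0 | hIu
  · exfalso
    rw [hI0] at heI
    exact he0 heI
  have h1I : (1 : S) ∈ I := by rw [hIu]; trivial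
  obtain ⟨l, hl, h1le⟩ := h1I
  rw [show (1 : S)⁻¹ * 1 = 1 from by rw [idem_inv (one_mul 1), one_mul]] at h1le
  have hjl1 : jl l = 1 := nle_antisymm (nle_one_of_idem (jl_idem (hEl l hl))) h1le
  have key : ∀ f : S, f * f = f → f = jl (l.map (f * ·)) := by
    intro f hf
    rw [← mul_jl (hEl l hl) f, hjl1, mul_one]
  have hchoice : ∀ f x : S, f * f = f → x ∈ l → f * x = x ∨ f * x = 0 := by
    intro f x hf hx
    have hax := hl x hx
    have hfx : nle (f * x) x := ⟨f, hf, rfl⟩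
    rcases hax.2 with hh | hmin'
    · right; rw [hh, InverseMonoidWithZero.mul_zero']
    · by_cases h0 : f * x = 0
      · right; exact h0
      · left; exact hmin' (f * x) (idem_mul_idem hf hax.1) h0 hfx
  have hinj : Function.Injective
      (fun (f : {e : S | e * e = e}) (i : Fin l.length) => f.1 * l.get i = l.get i) := by
    intro f g hfg
    have hf2 : f.1 * f.1 = f.1 := f.2
    have hg2 : g.1 * g.1 = g.1 := g.2
    have hmapeq : l.map (f.1 * ·) = l.map (g.1 * ·) := by
      apply List.ext_get (by simp)
      intro i h1 h2
      have hi : i < l.length := by simpa using h1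
      simp only [List.get_eq_getElem, List.getElem_map]
      show f.1 * l.get ⟨i, hi⟩ = g.1 * l.get ⟨i, hi⟩
      have hPQ : (f.1 * l.get ⟨i, hi⟩ = l.get ⟨i, hi⟩) ↔
          (g.1 * l.get ⟨i, hi⟩ = l.get ⟨i, hi⟩) :=
        iff_of_eq (congrFun hfg ⟨i, hi⟩)
      have hxmem : l.get ⟨i, hi⟩ ∈ l := List.get_mem l ⟨i, hi⟩
      rcases hchoice f.1 (l.get ⟨i, hi⟩) hf2 hxmem with hh | hh
      · rw [hh, hPQ.mp hh]
      · rcases hchoice g.1 (l.get ⟨i, hi⟩) hg2 hxmem with hh' | hh'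
        · have hfx : f.1 * l.get ⟨i, hi⟩ = l.get ⟨i, hi⟩ := hPQ.mpr hh'
          have hx0 : l.get ⟨i, hi⟩ = 0 := hfx.symm.trans hh
          rw [hh, hh', hx0]
        · rw [hh, hh']
    apply Subtype.ext
    rw [key f.1 hf2, key g.1 hg2, hmapeq]
  haveI : Finite {e : S | e * e = e} := Finite.of_injective _ hinj
  exact Set.toFinite _
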